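/- For every α > 0, d ≥ 2 and p ∈ {1,…,d−1} there exist δ > 0 and b > 0 with the following property. For every g ∈ GL(d,ℝ), every p-dimensional subspace P and (d−p)-dimensional subspace Q of ℝ^d with min{∠(P,Q), ∠(gP,gQ)} ≥ α, and every pair of p-dimensional subspaces P₁, P₂ with Pᵢ ∩ Q = {0} and d(g·Pᵢ, g·P) < δ (i = 1,2), one has d(g·P₁, g·P₂) ≥ b·(m(g|_Q)/‖g|_P‖)·d(P₁,P₂). -/

import Mathlib

noncomputable section

open scoped Matrix RealInnerProductSpace
open Filter Topology

namespace Paper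

abbrev Euc (d : ℕ) : Type := EuclideanSpace ℝ (Fin d)

/-- The action of a `d × d` real matrix on Euclidean space. -/
def act {d : ℕ} (g : Matrix (Fin d) (Fin d) ℝ) (v : Euc d) : Euc d :=
  Matrix.toEuclideanCLM (𝕜 := ℝ) g v

/-- The operator norm of a matrix acting on Euclidean space. -/
def opNorm {d : ℕ} (g : Matrix (Fin d) (Fin d) ℝ) : ℝ :=
  ‖(Matrix.toEuclideanCLM (𝕜 := ℝ) g : Euc d →L[ℝ] Euc d)‖

/-- The underlying matrix of an element of `GL (Fin d) ℝ`. -/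
def mat {d : ℕ} (g : GL (Fin d) ℝ) : Matrix (Fin d) (Fin d) ℝ := ↑g

/-- The `p`-th singular value (`1`-indexed), via the min-max characterization:
`σ_p(g)` is the largest, over `p`-dimensional subspaces `P`, of the minimal
stretch of unit vectors of `P`. -/
def sv {d : ℕ} (g : Matrix (Fin d) (Fin d) ℝ) (p : ℕ) : ℝ :=
  sSup { r | ∃ P : Submodule ℝ (Euc d), Module.finrank ℝ P = p ∧
      r = sInf { t | ∃ v ∈ P, ‖v‖ = 1 ∧ t = ‖act g v‖ } }

/-- `g` has a gap of index `p` if `σ_p(g) > σ_{p+1}(g)`. -/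
def HasGap {d : ℕ} (g : Matrix (Fin d) (Fin d) ℝ) (p : ℕ) : Prop :=
  sv g (p + 1) < sv g p

/-- `U` is a Cartan attractor of index `p` for `g`: for some singular value
decomposition `g = k·a·l` (`k`, `l` orthogonal, `a` diagonal with decreasing
nonnegative entries), `U` is the span of the first `p` columns of `k`. -/
def IsCartanAttractor {d : ℕ} (g : Matrix (Fin d) (Fin d) ℝ) (p : ℕ)
    (U : Submodule ℝ (Euc d)) : Prop :=
  ∃ k l : Matrix (Fin d) (Fin d) ℝ, ∃ σ : Fin d → ℝ,
    k ∈ Matrix.unitaryGroup (Fin d) ℝ ∧ l ∈ Matrix.unitaryGroup (Fin d) ℝ ∧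
    (∀ i j : Fin d, i ≤ j → σ j ≤ σ i) ∧ (∀ i, 0 ≤ σ i) ∧
    g = k * Matrix.diagonal σ * l ∧
    U = Submodule.span ℝ { x : Euc d | ∃ i : Fin d, (i : ℕ) < p ∧
          x = (EuclideanSpace.equiv (Fin d) ℝ).symm (fun j => k j i) }

/-- The Cartan attractor `U_p(g)`; when `g` has a gap of index `p` it is the
unique subspace satisfying `IsCartanAttractor g p`. -/
def cartanAttractor {d : ℕ} (g : Matrix (Fin d) (Fin d) ℝ) (p : ℕ) :
    Submodule ℝ (Euc d) :=
  letI := Classical.propDecidable (∃ U, IsCartanAttractor g p U)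
  if h : ∃ U, IsCartanAttractor g p U then h.choose else ⊥

/-- The angle `∠(P,Q)` between two subspaces: the infimum of angles between
nonzero vectors of `P` and `Q`. -/
def subAngle {d : ℕ} (P Q : Submodule ℝ (Euc d)) : ℝ :=
  sInf { θ | ∃ v ∈ P, v ≠ 0 ∧ ∃ w ∈ Q, w ≠ 0 ∧ θ = InnerProductGeometry.angle v w }

/-- `sin ∠(v,w)`. -/
def sinAngle {d : ℕ} (v w : Euc d) : ℝ := Real.sin (InnerProductGeometry.angle v w)

/-- The distance `d(P,Q) = max_{v ∈ P∖{0}} min_{w ∈ Q∖{0}} sin ∠(v,w)`. -/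
def grassDist {d : ℕ} (P Q : Submodule ℝ (Euc d)) : ℝ :=
  sSup { r | ∃ v ∈ P, v ≠ 0 ∧
      r = sInf { s | ∃ w ∈ Q, w ≠ 0 ∧ s = sinAngle v w } }

/-- The image `g·P` of a subspace under a matrix. -/
def mapMat {d : ℕ} (g : Matrix (Fin d) (Fin d) ℝ) (P : Submodule ℝ (Euc d)) :
    Submodule ℝ (Euc d) :=
  P.map ((Matrix.toEuclideanCLM (𝕜 := ℝ) g : Euc d →L[ℝ] Euc d) : Euc d →ₗ[ℝ] Euc d)

/-- `m(g|_W)`, the minimal stretch of unit vectors of `W` under `g`. -/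
def minRestrict {d : ℕ} (g : Matrix (Fin d) (Fin d) ℝ) (W : Submodule ℝ (Euc d)) : ℝ :=
  sInf { t | ∃ v ∈ W, ‖v‖ = 1 ∧ t = ‖act g v‖ }

/-- `‖g|_W‖`, the maximal stretch of unit vectors of `W` under `g`. -/
def normRestrict {d : ℕ} (g : Matrix (Fin d) (Fin d) ℝ) (W : Submodule ℝ (Euc d)) : ℝ :=
  sSup { t | ∃ v ∈ W, ‖v‖ = 1 ∧ t = ‖act g v‖ }


-- Auxiliary lemmas
variable {d : ℕ}

lemma sinAngle_nonneg (v w : Euc d) : 0 ≤ sinAngle v w :=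
  Real.sin_nonneg_of_nonneg_of_le_pi (InnerProductGeometry.angle_nonneg _ _)
    (InnerProductGeometry.angle_le_pi _ _)

lemma sinAngle_le_one (v w : Euc d) : sinAngle v w ≤ 1 := Real.sin_le_one _

lemma sinAngle_sq (v w : Euc d) :
    (sinAngle v w * ‖v‖)^2 * ‖w‖^2 = ‖v‖^2*‖w‖^2 - (inner ℝ v w : ℝ)^2 := by
  have h := InnerProductGeometry.sin_angle_mul_norm_mul_norm v w
  have hcs := real_inner_mul_inner_self_le v w
  have h2 : (Real.sin (InnerProductGeometry.angle v w) * (‖v‖ * ‖w‖))^2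
      = (inner ℝ v v : ℝ) * (inner ℝ w w : ℝ) - (inner ℝ v w : ℝ) * (inner ℝ v w : ℝ) := by
    rw [h]; exact Real.sq_sqrt (by linarith)
  rw [real_inner_self_eq_norm_sq, real_inner_self_eq_norm_sq] at h2
  unfold sinAngle
  nlinarith [h2]

lemma sinAngle_mul_norm_le (v w : Euc d) (hw : w ≠ 0) (t : ℝ) :
    sinAngle v w * ‖v‖ ≤ ‖v - t • w‖ := by
  have hsq := sinAngle_sq v w
  have hexp : ‖v - t • w‖^2 = ‖v‖^2 - 2*(t*(inner ℝ v w : ℝ)) + t^2*‖w‖^2 := by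
    rw [norm_sub_sq_real, real_inner_smul_right, norm_smul]
    simp [mul_pow]
  have hw0 : 0 < ‖w‖ := norm_pos_iff.2 hw
  have h1 : 0 ≤ sinAngle v w * ‖v‖ :=
    mul_nonneg (sinAngle_nonneg v w) (norm_nonneg v)
  have h2 : 0 ≤ ‖v - t • w‖ := norm_nonneg _
  refine le_of_pow_le_pow_left₀ (n := 2) two_ne_zero h2 ?_
  nlinarith [sq_nonneg (t*‖w‖^2 - (inner ℝ v w : ℝ)), mul_pos hw0 hw0]

lemma exists_sinAngle_eq (v w : Euc d) (hw : w ≠ 0) :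
    ∃ t : ℝ, ‖v - t • w‖ ≤ sinAngle v w * ‖v‖ := by
  refine ⟨(inner ℝ v w : ℝ)/‖w‖^2, ?_⟩
  have hsq := sinAngle_sq v w
  have hw0 : 0 < ‖w‖ := norm_pos_iff.2 hw
  set t : ℝ := (inner ℝ v w : ℝ)/‖w‖^2 with ht
  have hexp : ‖v - t • w‖^2 = ‖v‖^2 - 2*(t*(inner ℝ v w : ℝ)) + t^2*‖w‖^2 := by
    rw [norm_sub_sq_real, real_inner_smul_right, norm_smul]
    simp [mul_pow]
  have h1 : 0 ≤ sinAngle v w * ‖v‖ :=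
    mul_nonneg (sinAngle_nonneg v w) (norm_nonneg v)
  have h2 : 0 ≤ ‖v - t • w‖ := norm_nonneg _
  have hts : t * ‖w‖^2 = (inner ℝ v w : ℝ) := by
    rw [ht]; field_simp
  refine le_of_pow_le_pow_left₀ (n := 2) two_ne_zero h1 ?_
  nlinarith [mul_pos hw0 hw0]

lemma subAngle_le {P Q : Submodule ℝ (Euc d)} {v w : Euc d}
    (hv : v ∈ P) (hv0 : v ≠ 0) (hw : w ∈ Q) (hw0 : w ≠ 0) :
    subAngle P Q ≤ InnerProductGeometry.angle v w := by
  have hbdd : BddBelow { θ | ∃ v ∈ P, v ≠ 0 ∧ ∃ w ∈ Q, w ≠ 0 ∧ θ = InnerProductGeometry.angle v w } := by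
    refine ⟨0, ?_⟩
    rintro θ ⟨v', -, -, w', -, -, rfl⟩
    exact InnerProductGeometry.angle_nonneg v' w'
  exact csInf_le hbdd ⟨v, hv, hv0, w, hw, hw0, rfl⟩

lemma inf_eq_bot_of_subAngle {α : ℝ} (hα : 0 < α) {P Q : Submodule ℝ (Euc d)}
    (h : α ≤ subAngle P Q) : P ⊓ Q = ⊥ := by
  rw [eq_bot_iff]
  intro x hx
  by_contra hx0
  have hx0' : x ≠ 0 := fun h' => hx0 (h' ▸ Submodule.zero_mem _)
  have := (subAngle_le hx.1 hx0' hx.2 hx0').trans_eq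
    (InnerProductGeometry.angle_self hx0')
  linarith [h.trans this]

lemma alpha_le_half_pi {α : ℝ} {P Q : Submodule ℝ (Euc d)}
    (h : α ≤ subAngle P Q) {v w : Euc d} (hv : v ∈ P) (hv0 : v ≠ 0)
    (hw : w ∈ Q) (hw0 : w ≠ 0) : α ≤ Real.pi / 2 := by
  have h1 := h.trans (subAngle_le hv hv0 hw hw0)
  have h2 := h.trans (subAngle_le (Submodule.neg_mem _ hv) (neg_ne_zero.2 hv0) hw hw0)
  rw [InnerProductGeometry.angle_neg_left] at h2
  linarith

lemma sin_le_sin_of {α θ : ℝ} (hα : 0 < α) (hα2 : α ≤ Real.pi / 2)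
    (h1 : α ≤ θ) (h2 : θ ≤ Real.pi - α) : Real.sin α ≤ Real.sin θ := by
  have hmono := Real.strictMonoOn_sin.monotoneOn
  have hpi := Real.pi_pos
  rcases le_or_gt θ (Real.pi / 2) with hc | hc
  · exact hmono ⟨by linarith, hα2⟩ ⟨by linarith, hc⟩ h1
  · rw [← Real.sin_pi_sub θ]
    exact hmono ⟨by linarith, hα2⟩ ⟨by linarith, by linarith⟩ (by linarith)

/-- key separation: `sin α * ‖q‖ ≤ ‖p + q‖` for `p ∈ P`, `q ∈ Q`. -/
lemma norm_add_lower {α : ℝ} (hα : 0 < α) (hα2 : α ≤ Real.pi / 2)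
    {P Q : Submodule ℝ (Euc d)} (h : α ≤ subAngle P Q)
    {p q : Euc d} (hp : p ∈ P) (hq : q ∈ Q) :
    Real.sin α * ‖q‖ ≤ ‖p + q‖ := by
  rcases eq_or_ne q 0 with rfl | hq0
  · simp [norm_nonneg]
  rcases eq_or_ne p 0 with rfl | hp0
  · rw [zero_add]
    calc Real.sin α * ‖q‖ ≤ 1 * ‖q‖ := by
          exact mul_le_mul_of_nonneg_right (Real.sin_le_one α) (norm_nonneg q)
      _ = ‖q‖ := one_mul _
  · have h1 := h.trans (subAngle_le hp hp0 hq hq0)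
    have h2 := h.trans (subAngle_le (Submodule.neg_mem _ hp) (neg_ne_zero.2 hp0) hq hq0)
    rw [InnerProductGeometry.angle_neg_left] at h2
    have hsin : Real.sin α ≤ sinAngle q p := by
      unfold sinAngle
      rw [InnerProductGeometry.angle_comm]
      exact sin_le_sin_of hα hα2 h1 (by linarith)
    have hle := sinAngle_mul_norm_le q p hp0 (-1)
    have : q - (-1 : ℝ) • p = p + q := by
      rw [neg_one_smul]; abel
    rw [this] at hle
    calc Real.sin α * ‖q‖ ≤ sinAngle q p * ‖q‖ :=
          mul_le_mul_of_nonneg_right hsin (norm_nonneg q)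
      _ ≤ ‖p + q‖ := hle

lemma norm_add_lower' {α : ℝ} (hα : 0 < α) (hα2 : α ≤ Real.pi / 2)
    {P Q : Submodule ℝ (Euc d)} (h : α ≤ subAngle P Q)
    {p q : Euc d} (hp : p ∈ P) (hq : q ∈ Q) :
    Real.sin α * ‖p‖ ≤ ‖p + q‖ := by
  have hsym : subAngle Q P = subAngle P Q := by
    unfold subAngle
    congr 1
    ext θ
    constructor
    · rintro ⟨v, hv, hv0, w, hw, hw0, rfl⟩
      exact ⟨w, hw, hw0, v, hv, hv0, InnerProductGeometry.angle_comm v w⟩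
    · rintro ⟨v, hv, hv0, w, hw, hw0, rfl⟩
      exact ⟨w, hw, hw0, v, hv, hv0, InnerProductGeometry.angle_comm v w⟩
  have := norm_add_lower hα hα2 (hsym ▸ h) hq hp
  rwa [add_comm] at this

lemma act_add (g : Matrix (Fin d) (Fin d) ℝ) (x y : Euc d) :
    act g (x + y) = act g x + act g y := map_add (Matrix.toEuclideanCLM (𝕜 := ℝ) g) x y

lemma act_sub (g : Matrix (Fin d) (Fin d) ℝ) (x y : Euc d) :
    act g (x - y) = act g x - act g y := map_sub (Matrix.toEuclideanCLM (𝕜 := ℝ) g) x y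

lemma act_smul (g : Matrix (Fin d) (Fin d) ℝ) (t : ℝ) (x : Euc d) :
    act g (t • x) = t • act g x := map_smul (Matrix.toEuclideanCLM (𝕜 := ℝ) g) t x

lemma act_act (g h : Matrix (Fin d) (Fin d) ℝ) (x : Euc d) :
    act g (act h x) = act (g * h) x := by
  unfold act
  rw [map_mul]
  rfl

lemma act_one (x : Euc d) : act (1 : Matrix (Fin d) (Fin d) ℝ) x = x := by
  unfold act
  rw [map_one]
  rfl

lemma act_leftinv (g : GL (Fin d) ℝ) (x : Euc d) :
    act (mat g⁻¹) (act (mat g) x) = x := by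
  rw [act_act]
  have : mat g⁻¹ * mat g = 1 := g.inv_mul
  rw [this, act_one]

lemma act_injective (g : GL (Fin d) ℝ) : Function.Injective (act (mat g)) := by
  intro x y h
  have := congrArg (act (mat g⁻¹)) h
  rwa [act_leftinv, act_leftinv] at this

lemma act_ne_zero (g : GL (Fin d) ℝ) {x : Euc d} (hx : x ≠ 0) : act (mat g) x ≠ 0 := by
  intro h
  apply hx
  have h0 : act (mat g) (0 : Euc d) = 0 := map_zero (Matrix.toEuclideanCLM (𝕜 := ℝ) (mat g))
  exact act_injective g (h.trans h0.symm)

lemma norm_act_pos (g : GL (Fin d) ℝ) {x : Euc d} (hx : x ≠ 0) : 0 < ‖act (mat g) x‖ :=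
  norm_pos_iff.2 (act_ne_zero g hx)

lemma mem_mapMat {g : Matrix (Fin d) (Fin d) ℝ} {P : Submodule ℝ (Euc d)} {x : Euc d} :
    x ∈ mapMat g P ↔ ∃ y ∈ P, act g y = x := by
  simp [mapMat, Submodule.mem_map]
  rfl

lemma act_mem_mapMat {g : Matrix (Fin d) (Fin d) ℝ} {P : Submodule ℝ (Euc d)} {x : Euc d}
    (hx : x ∈ P) : act g x ∈ mapMat g P := mem_mapMat.2 ⟨x, hx, rfl⟩

-- submodule facts
lemma sup_eq_top_of {p : ℕ} (hd : p ≤ d) {P Q : Submodule ℝ (Euc d)}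
    (hfP : Module.finrank ℝ P = p) (hfQ : Module.finrank ℝ Q = d - p)
    (hI : P ⊓ Q = ⊥) : P ⊔ Q = ⊤ := by
  apply Submodule.eq_top_of_finrank_eq
  have h := Submodule.finrank_sup_add_finrank_inf_eq P Q
  rw [hI, hfP, hfQ] at h
  simp [finrank_bot] at h
  rw [finrank_euclideanSpace_fin, h]
  omega

lemma exists_decomp {P Q : Submodule ℝ (Euc d)} (h : P ⊔ Q = ⊤) (x : Euc d) :
    ∃ u ∈ P, ∃ q ∈ Q, x = u + q := by
  have hx : x ∈ P ⊔ Q := h ▸ Submodule.mem_top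
  rcases Submodule.mem_sup.1 hx with ⟨u, hu, q, hq, rfl⟩
  exact ⟨u, hu, q, hq, rfl⟩

lemma ne_bot_of_finrank {P : Submodule ℝ (Euc d)} {p : ℕ} (hp : 1 ≤ p)
    (hfP : Module.finrank ℝ P = p) : ∃ v ∈ P, v ≠ 0 := by
  apply Submodule.exists_mem_ne_zero_of_ne_bot
  intro h
  rw [h, finrank_bot] at hfP
  omega

-- inner set facts; iSet Q v = { s | ∃ w ∈ Q, w ≠ 0 ∧ s = sinAngle v w }
lemma iSet_nonempty {Q : Submodule ℝ (Euc d)} (hQ : ∃ w ∈ Q, w ≠ 0) (v : Euc d) :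
    Set.Nonempty { s | ∃ w ∈ Q, w ≠ 0 ∧ s = sinAngle v w } := by
  rcases hQ with ⟨w, hw, hw0⟩
  exact ⟨sinAngle v w, w, hw, hw0, rfl⟩

lemma iSet_bddBelow {Q : Submodule ℝ (Euc d)} (v : Euc d) :
    BddBelow { s | ∃ w ∈ Q, w ≠ 0 ∧ s = sinAngle v w } := by
  refine ⟨0, ?_⟩
  rintro s ⟨w, -, -, rfl⟩
  exact sinAngle_nonneg v w

lemma sInf_iSet_nonneg {Q : Submodule ℝ (Euc d)} (hQ : ∃ w ∈ Q, w ≠ 0) (v : Euc d) :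
    0 ≤ sInf { s | ∃ w ∈ Q, w ≠ 0 ∧ s = sinAngle v w } := by
  apply le_csInf (iSet_nonempty hQ v)
  rintro s ⟨w, -, -, rfl⟩
  exact sinAngle_nonneg v w

lemma sInf_iSet_le_one {Q : Submodule ℝ (Euc d)} (hQ : ∃ w ∈ Q, w ≠ 0) (v : Euc d) :
    sInf { s | ∃ w ∈ Q, w ≠ 0 ∧ s = sinAngle v w } ≤ 1 := by
  rcases hQ with ⟨w, hw, hw0⟩
  exact (csInf_le (iSet_bddBelow v) ⟨w, hw, hw0, rfl⟩).trans (sinAngle_le_one v w)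

lemma oSet_bddAbove {P Q : Submodule ℝ (Euc d)} (hQ : ∃ w ∈ Q, w ≠ 0) :
    BddAbove { r | ∃ v ∈ P, v ≠ 0 ∧
      r = sInf { s | ∃ w ∈ Q, w ≠ 0 ∧ s = sinAngle v w } } := by
  refine ⟨1, ?_⟩
  rintro r ⟨v, -, -, rfl⟩
  exact sInf_iSet_le_one hQ v

lemma le_grassDist {P Q : Submodule ℝ (Euc d)} (hQ : ∃ w ∈ Q, w ≠ 0)
    {v : Euc d} (hv : v ∈ P) (hv0 : v ≠ 0) :
    sInf { s | ∃ w ∈ Q, w ≠ 0 ∧ s = sinAngle v w } ≤ grassDist P Q :=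
  le_csSup (oSet_bddAbove hQ) ⟨v, hv, hv0, rfl⟩

lemma grassDist_nonneg {P Q : Submodule ℝ (Euc d)} (hP : ∃ v ∈ P, v ≠ 0)
    (hQ : ∃ w ∈ Q, w ≠ 0) : 0 ≤ grassDist P Q := by
  rcases hP with ⟨v, hv, hv0⟩
  exact (sInf_iSet_nonneg hQ v).trans (le_grassDist hQ hv hv0)

-- minRestrict / normRestrict
lemma minRestrict_nonneg (g : Matrix (Fin d) (Fin d) ℝ) {Q : Submodule ℝ (Euc d)}
    (hQ : ∃ w ∈ Q, w ≠ 0) : 0 ≤ minRestrict g Q := by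
  rcases hQ with ⟨w, hw, hw0⟩
  apply le_csInf
  · refine ⟨‖act g (‖w‖⁻¹ • w)‖, ‖w‖⁻¹ • w, Submodule.smul_mem _ _ hw, ?_, rfl⟩
    rw [norm_smul, norm_inv, norm_norm, inv_mul_cancel₀ (norm_ne_zero_iff.2 hw0)]
  · rintro t ⟨v, -, -, rfl⟩
    exact norm_nonneg _

lemma minRestrict_mul_le (g : Matrix (Fin d) (Fin d) ℝ) {Q : Submodule ℝ (Euc d)}
    {x : Euc d} (hx : x ∈ Q) :
    minRestrict g Q * ‖x‖ ≤ ‖act g x‖ := by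
  rcases eq_or_ne x 0 with rfl | hx0
  · simp [norm_nonneg]
  have hxn : ‖x‖ ≠ 0 := norm_ne_zero_iff.2 hx0
  have hxp : 0 < ‖x‖ := norm_pos_iff.2 hx0
  have hmem : ‖act g (‖x‖⁻¹ • x)‖ ∈ { t | ∃ v ∈ Q, ‖v‖ = 1 ∧ t = ‖act g v‖ } := by
    refine ⟨‖x‖⁻¹ • x, Submodule.smul_mem _ _ hx, ?_, rfl⟩
    rw [norm_smul, norm_inv, norm_norm, inv_mul_cancel₀ hxn]
  have hbdd : BddBelow { t | ∃ v ∈ Q, ‖v‖ = 1 ∧ t = ‖act g v‖ } := by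
    refine ⟨0, ?_⟩
    rintro t ⟨v, -, -, rfl⟩
    exact norm_nonneg _
  have h := csInf_le hbdd hmem
  rw [act_smul, norm_smul, norm_inv, norm_norm] at h
  calc minRestrict g Q * ‖x‖ ≤ (‖x‖⁻¹ * ‖act g x‖) * ‖x‖ :=
        mul_le_mul_of_nonneg_right h (norm_nonneg x)
    _ = ‖act g x‖ := by field_simp

lemma normRestrict_sets_bdd (g : Matrix (Fin d) (Fin d) ℝ) (W : Submodule ℝ (Euc d)) :
    BddAbove { t | ∃ v ∈ W, ‖v‖ = 1 ∧ t = ‖act g v‖ } := by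
  refine ⟨‖(Matrix.toEuclideanCLM (𝕜 := ℝ) g : Euc d →L[ℝ] Euc d)‖, ?_⟩
  rintro t ⟨v, -, hv1, rfl⟩
  have := (Matrix.toEuclideanCLM (𝕜 := ℝ) g : Euc d →L[ℝ] Euc d).le_opNorm v
  rw [hv1, mul_one] at this
  exact this

lemma le_normRestrict_mul (g : Matrix (Fin d) (Fin d) ℝ) {P : Submodule ℝ (Euc d)}
    {u : Euc d} (hu : u ∈ P) :
    ‖act g u‖ ≤ normRestrict g P * ‖u‖ := by
  rcases eq_or_ne u 0 with rfl | hu0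
  · have : act g (0 : Euc d) = 0 := map_zero (Matrix.toEuclideanCLM (𝕜 := ℝ) g)
    simp [this]
  have hun : ‖u‖ ≠ 0 := norm_ne_zero_iff.2 hu0
  have hmem : ‖act g (‖u‖⁻¹ • u)‖ ∈ { t | ∃ v ∈ P, ‖v‖ = 1 ∧ t = ‖act g v‖ } := by
    refine ⟨‖u‖⁻¹ • u, Submodule.smul_mem _ _ hu, ?_, rfl⟩
    rw [norm_smul, norm_inv, norm_norm, inv_mul_cancel₀ hun]
  have h := le_csSup (normRestrict_sets_bdd g P) hmem
  rw [act_smul, norm_smul, norm_inv, norm_norm] at h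
  have := mul_le_mul_of_nonneg_right h (norm_nonneg u)
  calc ‖act g u‖ = (‖u‖⁻¹ * ‖act g u‖) * ‖u‖ := by field_simp
    _ ≤ normRestrict g P * ‖u‖ := this

lemma normRestrict_pos (g : GL (Fin d) ℝ) {P : Submodule ℝ (Euc d)}
    (hP : ∃ v ∈ P, v ≠ 0) : 0 < normRestrict (mat g) P := by
  rcases hP with ⟨v, hv, hv0⟩
  have h1 := le_normRestrict_mul (mat g) hv
  have h2 := norm_act_pos g hv0
  have h3 : 0 < ‖v‖ := norm_pos_iff.2 hv0
  nlinarith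

/-- If `g·Pi` is within `sin α / 2` of `g·P` in `grassDist`, then for the graph
decomposition `u + q ∈ Pi` (`u ∈ P`, `q ∈ Q`) we get `‖g q‖ ≤ ‖g u‖`. -/
lemma star_lemma {α : ℝ} (hα : 0 < α) (hα2 : α ≤ Real.pi / 2)
    (g : GL (Fin d) ℝ) {P Q Pi : Submodule ℝ (Euc d)}
    (hangg : α ≤ subAngle (mapMat (mat g) P) (mapMat (mat g) Q))
    (hPne : ∃ v ∈ P, v ≠ 0)
    (hPQ : P ⊓ Q = ⊥) (hPiQ : Pi ⊓ Q = ⊥)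
    (hdist : grassDist (mapMat (mat g) Pi) (mapMat (mat g) P) < Real.sin α / 2)
    {u q : Euc d} (hu : u ∈ P) (hq : q ∈ Q) (hin : u + q ∈ Pi) :
    ‖act (mat g) q‖ ≤ ‖act (mat g) u‖ := by
  have hsα : 0 < Real.sin α :=
    Real.sin_pos_of_pos_of_lt_pi hα (lt_of_le_of_lt hα2 (by linarith [Real.pi_pos]))
  rcases eq_or_ne u 0 with rfl | hu0
  · -- then q ∈ Pi ⊓ Q = ⊥
    have hqPi : q ∈ Pi := by rwa [zero_add] at hin
    have : q = 0 := by
      have : q ∈ Pi ⊓ Q := ⟨hqPi, hq⟩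
      rwa [hPiQ, Submodule.mem_bot] at this
    subst this
    simp [map_zero (Matrix.toEuclideanCLM (𝕜 := ℝ) (mat g)), act]
  -- u ≠ 0 case
  have hv0 : u + q ≠ 0 := by
    intro h
    apply hu0
    have : u = -q := by linear_combination (norm := module) h
    have hmem : u ∈ P ⊓ Q := ⟨hu, this ▸ Submodule.neg_mem _ hq⟩
    rwa [hPQ, Submodule.mem_bot] at hmem
  set v : Euc d := act (mat g) (u + q) with hvdef
  have hvP : v ∈ mapMat (mat g) Pi := act_mem_mapMat hin
  have hvne : v ≠ 0 := act_ne_zero g hv0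
  have hgPne : ∃ w ∈ mapMat (mat g) P, w ≠ 0 := by
    rcases hPne with ⟨x, hx, hx0⟩
    exact ⟨act (mat g) x, act_mem_mapMat hx, act_ne_zero g hx0⟩
  have hvnorm : 0 < ‖v‖ := norm_pos_iff.2 hvne
  -- lower bound each sinAngle v w for w in g·P
  have hlow : ∀ s ∈ { s | ∃ w ∈ mapMat (mat g) P, w ≠ 0 ∧ s = sinAngle v w },
      Real.sin α * ‖act (mat g) q‖ / ‖v‖ ≤ s := by
    rintro s ⟨w, hw, hw0, rfl⟩
    rcases exists_sinAngle_eq v w hw0 with ⟨t, ht⟩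
    rcases mem_mapMat.1 hw with ⟨y, hy, rfl⟩
    have htw : v - t • act (mat g) y = act (mat g) (u - t • y) + act (mat g) q := by
      rw [hvdef, act_add, act_sub, act_smul]
      module
    have hmem1 : act (mat g) (u - t • y) ∈ mapMat (mat g) P :=
      act_mem_mapMat (Submodule.sub_mem _ hu (Submodule.smul_mem _ _ hy))
    have hmem2 : act (mat g) q ∈ mapMat (mat g) Q := act_mem_mapMat hq
    have hlb := norm_add_lower hα hα2 hangg hmem1 hmem2
    rw [← htw] at hlb
    have : Real.sin α * ‖act (mat g) q‖ ≤ sinAngle v (act (mat g) y) * ‖v‖ :=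
      hlb.trans ht
    rw [div_le_iff₀ hvnorm]
    exact this
  have hsinf : Real.sin α * ‖act (mat g) q‖ / ‖v‖ ≤
      sInf { s | ∃ w ∈ mapMat (mat g) P, w ≠ 0 ∧ s = sinAngle v w } :=
    le_csInf (iSet_nonempty hgPne v) hlow
  have hsup := le_grassDist (P := mapMat (mat g) Pi) hgPne hvP hvne
  have hchain : Real.sin α * ‖act (mat g) q‖ / ‖v‖ < Real.sin α / 2 :=
    lt_of_le_of_lt (hsinf.trans hsup) hdist
  -- conclude
  have hvle : ‖v‖ ≤ ‖act (mat g) u‖ + ‖act (mat g) q‖ := by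
    rw [hvdef, act_add]
    exact norm_add_le _ _
  rw [div_lt_iff₀ hvnorm] at hchain
  -- sin α * ‖gq‖ < sin α / 2 * ‖v‖ ≤ sin α /2 * (‖gu‖+‖gq‖)
  nlinarith [norm_nonneg (act (mat g) q), norm_nonneg (act (mat g) u)]


set_option maxHeartbeats 1000000 in
/-- Corollary 2.10 (`l.expandold`) of the paper. -/
theorem stmt7 {d : ℕ} (hd : 2 ≤ d) (p : ℕ) (hp1 : 1 ≤ p) (hpd : p ≤ d - 1)
    (α : ℝ) (hα : 0 < α) :
    ∃ δ > (0 : ℝ), ∃ b > (0 : ℝ), ∀ g : GL (Fin d) ℝ, ∀ P Q : Submodule ℝ (Euc d),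
      Module.finrank ℝ P = p → Module.finrank ℝ Q = d - p →
      α ≤ subAngle P Q → α ≤ subAngle (mapMat (mat g) P) (mapMat (mat g) Q) →
      ∀ P₁ P₂ : Submodule ℝ (Euc d),
        Module.finrank ℝ P₁ = p → Module.finrank ℝ P₂ = p →
        P₁ ⊓ Q = ⊥ → P₂ ⊓ Q = ⊥ →
        grassDist (mapMat (mat g) P₁) (mapMat (mat g) P) < δ →
        grassDist (mapMat (mat g) P₂) (mapMat (mat g) P) < δ →
        b * (minRestrict (mat g) Q / normRestrict (mat g) P) * grassDist P₁ P₂ ≤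
          grassDist (mapMat (mat g) P₁) (mapMat (mat g) P₂) := by
  have hπ := Real.pi_pos
  have hminpos : 0 < Real.sin (min α (Real.pi / 2)) :=
    Real.sin_pos_of_pos_of_lt_pi (lt_min hα (by linarith)) (by
      calc min α (Real.pi / 2) ≤ Real.pi / 2 := min_le_right _ _
        _ < Real.pi := by linarith)
  refine ⟨Real.sin (min α (Real.pi / 2)) / 2, by positivity,
    Real.sin (min α (Real.pi / 2)) ^ 2 / 4, by positivity, ?_⟩
  intro g P Q hfP hfQ hang hangg P₁ P₂ hf1 hf2 hI1 hI2 hd1 hd2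
  have hp_le_d : p ≤ d := by omega
  have hdp : 1 ≤ d - p := by omega
  have hPne := ne_bot_of_finrank hp1 hfP
  have hQne := ne_bot_of_finrank hdp hfQ
  have hP1ne := ne_bot_of_finrank hp1 hf1
  have hP2ne := ne_bot_of_finrank hp1 hf2
  obtain ⟨v₀, hv₀, hv₀0⟩ := hPne
  obtain ⟨w₀, hw₀, hw₀0⟩ := hQne
  have hα2 : α ≤ Real.pi / 2 := alpha_le_half_pi hang hv₀ hv₀0 hw₀ hw₀0
  have hPne : ∃ v ∈ P, v ≠ 0 := ⟨v₀, hv₀, hv₀0⟩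
  have hQne : ∃ w ∈ Q, w ≠ 0 := ⟨w₀, hw₀, hw₀0⟩
  have hmin : min α (Real.pi / 2) = α := min_eq_left hα2
  rw [hmin] at hd1 hd2 hminpos ⊢
  set sα := Real.sin α with hsαdef
  have hsα : 0 < sα := hminpos
  have hPQ : P ⊓ Q = ⊥ := inf_eq_bot_of_subAngle hα hang
  have hsupPQ : P ⊔ Q = ⊤ := sup_eq_top_of hp_le_d hfP hfQ hPQ
  have hsup2 : P₂ ⊔ Q = ⊤ := sup_eq_top_of hp_le_d hf2 hfQ hI2
  have hgP1ne : ∃ v ∈ mapMat (mat g) P₁, v ≠ 0 := by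
    obtain ⟨v, hv, hv0⟩ := hP1ne
    exact ⟨act (mat g) v, act_mem_mapMat hv, act_ne_zero g hv0⟩
  have hgP2ne : ∃ v ∈ mapMat (mat g) P₂, v ≠ 0 := by
    obtain ⟨v, hv, hv0⟩ := hP2ne
    exact ⟨act (mat g) v, act_mem_mapMat hv, act_ne_zero g hv0⟩
  set m := minRestrict (mat g) Q with hmdef
  set M := normRestrict (mat g) P with hMdef
  have hm0 : 0 ≤ m := minRestrict_nonneg _ hQne
  have hM : 0 < M := normRestrict_pos g hPne
  set D := grassDist (mapMat (mat g) P₁) (mapMat (mat g) P₂) with hDdef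
  have hD0 : 0 ≤ D := grassDist_nonneg hgP1ne hgP2ne
  have hstar1 : ∀ u q : Euc d, u ∈ P → q ∈ Q → u + q ∈ P₁ →
      ‖act (mat g) q‖ ≤ ‖act (mat g) u‖ := fun u q hu hq hin =>
    star_lemma hα hα2 g hangg hPne hPQ hI1 hd1 hu hq hin
  have hstar2 : ∀ u q : Euc d, u ∈ P → q ∈ Q → u + q ∈ P₂ →
      ‖act (mat g) q‖ ≤ ‖act (mat g) u‖ := fun u q hu hq hin =>
    star_lemma hα hα2 g hangg hPne hPQ hI2 hd2 hu hq hin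
  -- key per-element bound
  have key : ∀ s ∈ { r | ∃ v ∈ P₁, v ≠ 0 ∧
      r = sInf { s | ∃ w ∈ P₂, w ≠ 0 ∧ s = sinAngle v w } },
      sα ^ 2 / 4 * (m / M) * s ≤ D := by
    rintro _ ⟨v, hvP1, hv0, rfl⟩
    set s := sInf { s | ∃ w ∈ P₂, w ≠ 0 ∧ s = sinAngle v w } with hsdef
    have hs0 : 0 ≤ s := sInf_iSet_nonneg hP2ne v
    obtain ⟨u, hu, q₁, hq₁, hveq⟩ := exists_decomp hsupPQ v
    have hu0 : u ≠ 0 := by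
      intro h
      apply hv0
      have hvQ : v ∈ Q := by rw [hveq, h, zero_add]; exact hq₁
      have : v ∈ P₁ ⊓ Q := ⟨hvP1, hvQ⟩
      rwa [hI1, Submodule.mem_bot] at this
    have hun : 0 < ‖u‖ := norm_pos_iff.2 hu0
    obtain ⟨w₂, hw₂, qq, hqq, hueq⟩ := exists_decomp hsup2 u
    set q₂ : Euc d := w₂ - u with hq₂def
    have hq₂ : q₂ ∈ Q := by
      have : q₂ = -qq := by rw [hq₂def, hueq]; module
      rw [this]; exact Submodule.neg_mem _ hqq
    have huq₂ : u + q₂ = w₂ := by rw [hq₂def]; module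
    have hw₂0 : w₂ ≠ 0 := by
      intro h
      apply hu0
      have huQ : u ∈ Q := by
        have : u = -q₂ := by rw [hq₂def, h]; module
        rw [this]; exact Submodule.neg_mem _ hq₂
      have : u ∈ P ⊓ Q := ⟨hu, huQ⟩
      rwa [hPQ, Submodule.mem_bot] at this
    -- C1 : sα * ‖u‖ * s ≤ ‖q₁ - q₂‖
    have hsle : s ≤ sinAngle v w₂ := csInf_le (iSet_bddBelow v) ⟨w₂, hw₂, hw₂0, rfl⟩
    have hA1 := sinAngle_mul_norm_le v w₂ hw₂0 1
    have hdiff : v - (1 : ℝ) • w₂ = q₁ - q₂ := by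
      rw [one_smul, hveq, hq₂def]; module
    rw [hdiff] at hA1
    have hvlow : sα * ‖u‖ ≤ ‖v‖ := by
      have := norm_add_lower' hα hα2 hang hu hq₁
      rwa [← hveq] at this
    have hC1 : sα * ‖u‖ * s ≤ ‖q₁ - q₂‖ := by
      calc sα * ‖u‖ * s ≤ ‖v‖ * sinAngle v w₂ :=
            mul_le_mul hvlow hsle hs0 (norm_nonneg v)
        _ = sinAngle v w₂ * ‖v‖ := mul_comm _ _
        _ ≤ ‖q₁ - q₂‖ := hA1
    -- g-side
    set v' := act (mat g) v with hv'def
    have hv'P1 : v' ∈ mapMat (mat g) P₁ := act_mem_mapMat hvP1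
    have hv'0 : v' ≠ 0 := act_ne_zero g hv0
    have hv'n : 0 < ‖v'‖ := norm_pos_iff.2 hv'0
    have hvP1' : u + q₁ ∈ P₁ := by rwa [hveq] at hvP1
    have hstarq₁ : ‖act (mat g) q₁‖ ≤ ‖act (mat g) u‖ := hstar1 u q₁ hu hq₁ hvP1'
    have hgu : 0 < ‖act (mat g) u‖ := norm_act_pos g hu0
    have hv'le : ‖v'‖ ≤ 2 * ‖act (mat g) u‖ := by
      have h1 : v' = act (mat g) u + act (mat g) q₁ := by rw [hv'def, hveq, act_add]
      calc ‖v'‖ ≤ ‖act (mat g) u‖ + ‖act (mat g) q₁‖ := by rw [h1]; exact norm_add_le _ _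
        _ ≤ 2 * ‖act (mat g) u‖ := by linarith
    have hglow : ∀ x ∈ { x | ∃ w ∈ mapMat (mat g) P₂, w ≠ 0 ∧ x = sinAngle v' w },
        sα / 4 * (‖act (mat g) (q₁ - q₂)‖ / ‖act (mat g) u‖) ≤ x := by
      rintro _ ⟨w, hw, hw0, rfl⟩
      obtain ⟨t, ht⟩ := exists_sinAngle_eq v' w hw0
      obtain ⟨z, hz, hzw⟩ := mem_mapMat.1 hw
      obtain ⟨u₃, hu₃, q₃, hq₃, hzeq⟩ := exists_decomp hsupPQ (t • z)
      have he : v' - t • w = act (mat g) (u - u₃) + act (mat g) (q₁ - q₃) := by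
        rw [← hzw, ← act_smul, hzeq, hv'def, hveq, act_add, act_add, act_sub, act_sub]
        module
      have ha : act (mat g) (u - u₃) ∈ mapMat (mat g) P :=
        act_mem_mapMat (Submodule.sub_mem _ hu hu₃)
      have hb : act (mat g) (q₁ - q₃) ∈ mapMat (mat g) Q :=
        act_mem_mapMat (Submodule.sub_mem _ hq₁ hq₃)
      have h1 : sα * ‖act (mat g) (q₁ - q₃)‖ ≤ ‖v' - t • w‖ := by
        have := norm_add_lower hα hα2 hangg ha hb
        rwa [← he] at this
      have h2 : sα * ‖act (mat g) (u - u₃)‖ ≤ ‖v' - t • w‖ := by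
        have := norm_add_lower' hα hα2 hangg ha hb
        rwa [← he] at this
      have hmem3 : (u₃ - u) + (q₃ - q₂) ∈ P₂ := by
        have heq : (u₃ - u) + (q₃ - q₂) = t • z - w₂ := by
          rw [hzeq, ← huq₂]; module
        rw [heq]
        exact Submodule.sub_mem _ (Submodule.smul_mem _ _ hz) hw₂
      have hstar3 : ‖act (mat g) (q₃ - q₂)‖ ≤ ‖act (mat g) (u₃ - u)‖ :=
        hstar2 (u₃ - u) (q₃ - q₂) (Submodule.sub_mem _ hu₃ hu)
          (Submodule.sub_mem _ hq₃ hq₂) hmem3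
      have hnegnorm : ‖act (mat g) (u₃ - u)‖ = ‖act (mat g) (u - u₃)‖ := by
        rw [act_sub, act_sub, norm_sub_rev]
      have htri : ‖act (mat g) (q₁ - q₂)‖ ≤
          ‖act (mat g) (q₁ - q₃)‖ + ‖act (mat g) (q₃ - q₂)‖ := by
        have heq : act (mat g) (q₁ - q₂) = act (mat g) (q₁ - q₃) + act (mat g) (q₃ - q₂) := by
          simp only [act_sub]; abel
        rw [heq]; exact norm_add_le _ _
      -- ‖v' - t•w‖ ≥ sα/2 * ‖act (q₁ - q₂)‖
      have hN : sα / 2 * ‖act (mat g) (q₁ - q₂)‖ ≤ ‖v' - t • w‖ := by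
        nlinarith [norm_nonneg (v' - t • w)]
      -- conclude
      have hgoal : sα / 4 * (‖act (mat g) (q₁ - q₂)‖ / ‖act (mat g) u‖)
          = sα * ‖act (mat g) (q₁ - q₂)‖ / (4 * ‖act (mat g) u‖) := by ring
      rw [hgoal, div_le_iff₀ (by positivity)]
      have hS0 : 0 ≤ sinAngle v' w := sinAngle_nonneg _ _
      nlinarith [mul_le_mul_of_nonneg_left hv'le hS0, ht, hN,
        norm_nonneg (v' - t • w)]
    have hginf : sα / 4 * (‖act (mat g) (q₁ - q₂)‖ / ‖act (mat g) u‖) ≤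
        sInf { x | ∃ w ∈ mapMat (mat g) P₂, w ≠ 0 ∧ x = sinAngle v' w } :=
      le_csInf (iSet_nonempty hgP2ne v') hglow
    have hDge : sα / 4 * (‖act (mat g) (q₁ - q₂)‖ / ‖act (mat g) u‖) ≤ D :=
      hginf.trans (le_grassDist hgP2ne hv'P1 hv'0)
    -- combine
    have hmm : m * ‖q₁ - q₂‖ ≤ ‖act (mat g) (q₁ - q₂)‖ :=
      minRestrict_mul_le (mat g) (Submodule.sub_mem _ hq₁ hq₂)
    have hMM : ‖act (mat g) u‖ ≤ M * ‖u‖ := le_normRestrict_mul (mat g) hu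
    have hdivle : (m * (sα * ‖u‖ * s)) / (M * ‖u‖) ≤
        ‖act (mat g) (q₁ - q₂)‖ / ‖act (mat g) u‖ := by
      apply div_le_div₀ (norm_nonneg _) ?_ hgu hMM
      calc m * (sα * ‖u‖ * s) ≤ m * ‖q₁ - q₂‖ :=
            mul_le_mul_of_nonneg_left hC1 hm0
        _ ≤ ‖act (mat g) (q₁ - q₂)‖ := hmm
    have heqd : (m * (sα * ‖u‖ * s)) / (M * ‖u‖) = m * sα * s / M := by
      rw [div_eq_div_iff (by positivity) hM.ne']
      ring
    rw [heqd] at hdivle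
    calc sα ^ 2 / 4 * (m / M) * s = sα / 4 * (m * sα * s / M) := by ring
      _ ≤ sα / 4 * (‖act (mat g) (q₁ - q₂)‖ / ‖act (mat g) u‖) :=
          mul_le_mul_of_nonneg_left hdivle (by positivity)
      _ ≤ D := hDge
  -- final assembly
  rcases eq_or_lt_of_le hm0 with hm | hm
  · rw [← hm]
    simpa using hD0
  · have hc : 0 < sα ^ 2 / 4 * (m / M) := by positivity
    have hSne : Set.Nonempty { r | ∃ v ∈ P₁, v ≠ 0 ∧
        r = sInf { s | ∃ w ∈ P₂, w ≠ 0 ∧ s = sinAngle v w } } := by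
      obtain ⟨v, hv, hv0⟩ := hP1ne
      exact ⟨_, v, hv, hv0, rfl⟩
    have hSle : grassDist P₁ P₂ ≤ D / (sα ^ 2 / 4 * (m / M)) := by
      apply csSup_le hSne
      intro s hs
      rw [le_div_iff₀ hc]
      have := key s hs
      nlinarith
    calc sα ^ 2 / 4 * (m / M) * grassDist P₁ P₂
        ≤ sα ^ 2 / 4 * (m / M) * (D / (sα ^ 2 / 4 * (m / M))) :=
          mul_le_mul_of_nonneg_left hSle hc.le
      _ = D := by field_simp


end Paper
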